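/- Let β, γ, r₀ > 0 and 0 < ν̃ < √2 with ν = r₀√(γ/β)·ν̃. Set P(φ) = ν̃²Q(φ)/cos φ and Q(φ)² = 2cos²φ/(2cos²φ - ν̃²) for φ with 2cos²φ > ν̃². Then G(φ,τ) = P(φ)/(Q(φ) - cos(ντ)) satisfies β∂τ²G + λG + γr₀²G(G - cos φ)(G - 2cos φ) = 0 with λ = γr₀²(ν̃² - 2cos²φ). -/

import Mathlib

theorem stmt_10 (β γ r₀ ν' φ : ℝ) (hβ : 0 < β) (hγ : 0 < γ) (hr : 0 < r₀)
    (hν : 0 < ν') (hν2 : ν' < Real.sqrt 2)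
    (hφ : ν' ^ 2 < 2 * Real.cos φ ^ 2)
    (ν P Q lam : ℝ)
    (hνdef : ν = r₀ * Real.sqrt (γ / β) * ν')
    (hQ : Q ^ 2 = 2 * Real.cos φ ^ 2 / (2 * Real.cos φ ^ 2 - ν' ^ 2))
    (hP : P = ν' ^ 2 * Q / Real.cos φ)
    (hlam : lam = γ * r₀ ^ 2 * (ν' ^ 2 - 2 * Real.cos φ ^ 2))
    (τ : ℝ) (hden : Q - Real.cos (ν * τ) ≠ 0) :
    β * deriv (deriv (fun t => P / (Q - Real.cos (ν * t)))) τ +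
        lam * (P / (Q - Real.cos (ν * τ))) +
        γ * r₀ ^ 2 * (P / (Q - Real.cos (ν * τ))) *
          (P / (Q - Real.cos (ν * τ)) - Real.cos φ) *
          (P / (Q - Real.cos (ν * τ)) - 2 * Real.cos φ) = 0 := by
  have hc2 : 0 < Real.cos φ ^ 2 := by nlinarith [sq_nonneg ν']
  have hc : Real.cos φ ≠ 0 := by
    intro h; rw [h] at hc2; simp at hc2
  -- D has derivative ν sin(ν t)
  have hD : ∀ t : ℝ, HasDerivAt (fun s => Q - Real.cos (ν * s)) (ν * Real.sin (ν * t)) t := by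
    intro t
    have h1 : HasDerivAt (fun s : ℝ => ν * s) ν t := by
      simpa using (hasDerivAt_id t).const_mul ν
    have h2 : HasDerivAt (fun s : ℝ => Real.cos (ν * s)) (-Real.sin (ν * t) * ν) t :=
      (Real.hasDerivAt_cos (ν * t)).comp t h1
    have h3 := h2.const_sub Q
    exact h3.congr_deriv (by ring)
  -- first derivative on the set where D ≠ 0
  have hf1 : ∀ t : ℝ, Q - Real.cos (ν * t) ≠ 0 →
      HasDerivAt (fun s => P / (Q - Real.cos (ν * s)))
        (-P * (ν * Real.sin (ν * t)) / (Q - Real.cos (ν * t)) ^ 2) t := by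
    intro t ht
    have := (hasDerivAt_const t P).div (hD t) ht
    exact this.congr_deriv (by ring)
  have hDcont : Continuous (fun t => Q - Real.cos (ν * t)) := by fun_prop
  have hnear : ∀ᶠ t in nhds τ, Q - Real.cos (ν * t) ≠ 0 :=
    hDcont.continuousAt.eventually_ne hden
  -- deriv f equals the formula near τ
  have hEq : (deriv (fun t => P / (Q - Real.cos (ν * t)))) =ᶠ[nhds τ]
      (fun t => -P * (ν * Real.sin (ν * t)) / (Q - Real.cos (ν * t)) ^ 2) := by
    filter_upwards [hnear] with t ht
    exact (hf1 t ht).deriv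
  -- second derivative at τ
  set D := Q - Real.cos (ν * τ) with hDdef
  have hM : HasDerivAt (fun s => (Q - Real.cos (ν * s)) ^ 2)
      (2 * D * (ν * Real.sin (ν * τ))) τ := by
    have := (hD τ).pow 2
    exact this.congr_deriv (by rw [hDdef]; norm_num)
  have hN : HasDerivAt (fun s => -P * (ν * Real.sin (ν * s)))
      (-P * (ν * (ν * Real.cos (ν * τ)))) τ := by
    have h1 : HasDerivAt (fun s : ℝ => ν * s) ν τ := by
      simpa using (hasDerivAt_id τ).const_mul ν
    have h2 : HasDerivAt (fun s : ℝ => Real.sin (ν * s)) (Real.cos (ν * τ) * ν) τ :=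
      (Real.hasDerivAt_sin (ν * τ)).comp τ h1
    have := (h2.const_mul ν).const_mul (-P)
    exact this.congr_deriv (by ring)
  have hM0 : D ^ 2 ≠ 0 := pow_ne_zero 2 hden
  have hg : HasDerivAt (fun t => -P * (ν * Real.sin (ν * t)) / (Q - Real.cos (ν * t)) ^ 2)
      ((-P * (ν * (ν * Real.cos (ν * τ))) * D ^ 2 -
        -P * (ν * Real.sin (ν * τ)) * (2 * D * (ν * Real.sin (ν * τ)))) / (D ^ 2) ^ 2) τ :=
    hN.div hM hM0
  have hder2 : deriv (deriv (fun t => P / (Q - Real.cos (ν * t)))) τ =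
      (-P * (ν * (ν * Real.cos (ν * τ))) * D ^ 2 -
        -P * (ν * Real.sin (ν * τ)) * (2 * D * (ν * Real.sin (ν * τ)))) / (D ^ 2) ^ 2 := by
    rw [Filter.EventuallyEq.deriv_eq hEq]
    exact hg.deriv
  rw [hder2]
  -- algebraic identity
  have hβν : β * ν ^ 2 = γ * r₀ ^ 2 * ν' ^ 2 := by
    have hs : Real.sqrt (γ / β) ^ 2 = γ / β := Real.sq_sqrt (le_of_lt (div_pos hγ hβ))
    rw [hνdef, mul_pow, mul_pow, hs]; field_simp
  have h2c : 2 * Real.cos φ ^ 2 - ν' ^ 2 ≠ 0 := by nlinarith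
  have hQ' : Q ^ 2 * (2 * Real.cos φ ^ 2 - ν' ^ 2) = 2 * Real.cos φ ^ 2 := by
    rw [hQ]; field_simp
  have hsin : Real.sin (ν * τ) ^ 2 = 1 - Real.cos (ν * τ) ^ 2 := Real.sin_sq (ν * τ)
  rw [hP, hlam]
  field_simp
  rw [hDdef]
  linear_combination
    (ν' ^ 2 * Q * Real.cos φ ^ 2 *
      (-(Real.cos (ν * τ)) * (Q - Real.cos (ν * τ)) + 2 * Real.sin (ν * τ) ^ 2)) * hβν +
    (2 * (γ * r₀ ^ 2) * ν' ^ 4 * Q * Real.cos φ ^ 2) * hsin -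
    ((γ * r₀ ^ 2) * ν' ^ 4 * Q) * hQ'
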